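/- There exists a finite rotation-puzzle instance 𝒜 over the two-color tile set T_2 (the two-color COPY subpuzzle, splitting a wire into two copies) with one designated input boundary edge at its bottom and two designated output boundary edges at its top lying in two distinct columns, such that for each color c ∈ {blue, red} the instance 𝒜 has exactly one solution whose color at the input edge is c, and this solution has color c at both output edges. -/

import Mathlib

/-- The two Tantrix colors used in the two-color tile set. -/
inductive Color where
  | red
  | blue
deriving DecidableEq

/-- A tile is its clockwise color sequence: a word of length 6 over the colors,
edges indexed `0, …, 5` clockwise. -/
abbrev Tile := Fin 6 → Color

/-- Cyclic rotation of a tile by `k` steps: edge `i` of the rotated tile carries the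
color of edge `i + k` of the original sequence.  Two solutions are compared as the
assigned rotated color sequences, so orientations of a tile with identical color
sequences are identified. -/
def rotTile (k : Fin 6) (t : Tile) : Tile := fun i => t (i + k)

open Color in
/-- The two-color tile set `T₂`, consisting of the 8 color sequences
bbrrrr, rrbbbb, brrbrr, rbbrbb, rbrrrb, brbbbr, bbbbbb, rrrrrr. -/
def T2 : Set Tile :=
  { ![blue,blue,red,red,red,red],
    ![red,red,blue,blue,blue,blue],
    ![blue,red,red,blue,red,red],
    ![red,blue,blue,red,blue,blue],
    ![red,blue,red,red,red,blue],
    ![blue,red,blue,blue,blue,red],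
    ![blue,blue,blue,blue,blue,blue],
    ![red,red,red,red,red,red] }

/-- The six neighbor offsets of the hexagonal layout of `ℤ²`, listed clockwise
starting from straight up; edge `i` of a tile at `x` is the edge shared with the
neighboring point `x + dirs i`, and opposite directions differ by `3` (mod 6).
Two points are neighbors exactly if their difference is one of these offsets. -/
def dirs : Fin 6 → ℤ × ℤ := ![(0,1), (1,1), (1,0), (0,-1), (-1,-1), (-1,0)]

/-- A finite rotation-puzzle instance over the tile set `T2`:
a function from a finite set of points of `ℤ²` to `T2`. -/
structure Puzzle where
  tiles : ℤ × ℤ → Option Tile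
  finite : {x | tiles x ≠ none}.Finite
  memT2 : ∀ x t, tiles x = some t → t ∈ T2

/-- `sol` is a solution of the instance `P`: it assigns to each occupied point a
cyclic rotation of the tile placed there, such that for every pair of neighboring
occupied points the two assigned sequences give the same color to their joint edge
(edge `d` of the tile at `x` is glued to edge `d + 3` of the tile at `x + dirs d`). -/
def IsSolution (P : Puzzle) (sol : ℤ × ℤ → Option Tile) : Prop :=
  (∀ x, (P.tiles x = none → sol x = none) ∧
    (∀ t, P.tiles x = some t → ∃ k : Fin 6, sol x = some (rotTile k t))) ∧
  (∀ (x : ℤ × ℤ) (d : Fin 6) (s s' : Tile),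
    sol x = some s → sol (x + dirs d) = some s' → s d = s' (d + 3))

/-- `(x, d)` is a boundary edge of `P`: the point `x` is occupied and its
neighbor in direction `d` is not. -/
def IsBoundary (P : Puzzle) (x : ℤ × ℤ) (d : Fin 6) : Prop :=
  P.tiles x ≠ none ∧ P.tiles (x + dirs d) = none

/-- The solution `sol` has color `c` at the edge in direction `d` of the tile at `x`. -/
def SolColor (sol : ℤ × ℤ → Option Tile) (x : ℤ × ℤ) (d : Fin 6) (c : Color) : Prop :=
  ∃ s, sol x = some s ∧ s d = c

open Color in
/-- tile brrbrr -/
def tA : Tile := ![blue,red,red,blue,red,red]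
open Color in
/-- tile rrbbbb -/
def tB : Tile := ![red,red,blue,blue,blue,blue]
open Color in
/-- tile rbbrbb -/
def tD : Tile := ![red,blue,blue,red,blue,blue]

def Pt : ℤ × ℤ → Option Tile := fun x =>
  if x = (0,0) then some tA
  else if x = (-1,0) then some tB
  else if x = (-1,1) then some tA
  else if x = (0,1) then some tD
  else none

open Color in
def sB1 : Tile := ![blue,blue,red,red,blue,blue]
open Color in
def sB3 : Tile := ![blue,blue,red,blue,blue,red]
open Color in
def sR0 : Tile := ![red,red,blue,red,red,blue]
open Color in
def sR1 : Tile := ![red,blue,blue,blue,blue,red]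

def solB : ℤ × ℤ → Option Tile := fun x =>
  if x = (0,0) then some tA
  else if x = (-1,0) then some sB1
  else if x = (-1,1) then some tA
  else if x = (0,1) then some sB3
  else none

def solR : ℤ × ℤ → Option Tile := fun x =>
  if x = (0,0) then some sR0
  else if x = (-1,0) then some sR1
  else if x = (-1,1) then some sR0
  else if x = (0,1) then some tD
  else none

lemma Pt_none {x : ℤ × ℤ} (h0 : x ≠ (0,0)) (h1 : x ≠ (-1,0)) (h2 : x ≠ (-1,1))
    (h3 : x ≠ (0,1)) : Pt x = none ∧ solB x = none ∧ solR x = none := by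
  refine ⟨?_, ?_, ?_⟩ <;>
    simp only [Pt, solB, solR, if_neg h0, if_neg h1, if_neg h2, if_neg h3]

def Pz : Puzzle where
  tiles := Pt
  finite := by
    apply Set.Finite.subset
      ((((Set.finite_singleton ((0:ℤ),(1:ℤ))).insert (-1,1)).insert (-1,0)).insert (0,0))
    intro x hx
    by_contra hc
    simp only [Set.mem_insert_iff, Set.mem_singleton_iff] at hc
    push_neg at hc
    exact hx (Pt_none hc.1 hc.2.1 hc.2.2.1 hc.2.2.2).1
  memT2 := by
    intro x t h
    simp only [Pt] at h
    split_ifs at h <;> (cases h; simp [T2, tA, tB, tD])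

lemma mem4 {sol : ℤ × ℤ → Option Tile}
    (hnone : ∀ x, Pt x = none → sol x = none) {x : ℤ × ℤ} {s : Tile}
    (h : sol x = some s) :
    x = (0,0) ∨ x = (-1,0) ∨ x = (-1,1) ∨ x = (0,1) := by
  by_contra hc
  push_neg at hc
  rw [hnone x (Pt_none hc.1 hc.2.1 hc.2.2.1 hc.2.2.2).1] at h
  exact absurd h (by simp)

instance : Inhabited Color := ⟨Color.red⟩

lemma isSol_of (sol : ℤ × ℤ → Option Tile)
    (hnone : ∀ x, Pt x = none → sol x = none)
    (h0 : ∃ k : Fin 6, sol (0,0) = some (rotTile k tA))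
    (h1 : ∃ k : Fin 6, sol (-1,0) = some (rotTile k tB))
    (h2 : ∃ k : Fin 6, sol (-1,1) = some (rotTile k tA))
    (h3 : ∃ k : Fin 6, sol (0,1) = some (rotTile k tD))
    (key : ∀ d : Fin 6, ∀ p ∈ ([((0:ℤ),(0:ℤ)), (-1,0), (-1,1), (0,1)] : List (ℤ × ℤ)),
      (sol p).isSome → (sol (p + dirs d)).isSome →
        (sol p).iget d = (sol (p + dirs d)).iget (d+3)) :
    IsSolution Pz sol := by
  constructor
  · intro x
    refine ⟨fun h => hnone x h, fun t ht => ?_⟩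
    have ht' : Pt x = some t := ht
    simp only [Pt] at ht'
    split_ifs at ht' with e0 e1 e2 e3
    · cases ht'; cases e0; exact h0
    · cases ht'; cases e1; exact h1
    · cases ht'; cases e2; exact h2
    · cases ht'; cases e3; exact h3
  · intro x d s s' hs hs'
    have hx := mem4 hnone hs
    have hmem : x ∈ ([((0:ℤ),(0:ℤ)), (-1,0), (-1,1), (0,1)] : List (ℤ × ℤ)) := by
      rcases hx with rfl | rfl | rfl | rfl <;> simp
    have h := key d x hmem (by rw [hs]; rfl) (by rw [hs']; rfl)
    rwa [hs, hs', Option.iget_some, Option.iget_some] at h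

lemma hnoneB : ∀ x, Pt x = none → solB x = none := by
  intro x h
  by_contra hne
  obtain ⟨s, hs⟩ := Option.ne_none_iff_exists'.mp hne
  have h4 : x = (0,0) ∨ x = (-1,0) ∨ x = (-1,1) ∨ x = (0,1) := by
    by_contra hc
    push_neg at hc
    rw [(Pt_none hc.1 hc.2.1 hc.2.2.1 hc.2.2.2).2.1] at hs
    exact absurd hs (by simp)
  rcases h4 with rfl | rfl | rfl | rfl <;> exact absurd h (by decide)

lemma hnoneR : ∀ x, Pt x = none → solR x = none := by
  intro x h
  by_contra hne
  obtain ⟨s, hs⟩ := Option.ne_none_iff_exists'.mp hne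
  have h4 : x = (0,0) ∨ x = (-1,0) ∨ x = (-1,1) ∨ x = (0,1) := by
    by_contra hc
    push_neg at hc
    rw [(Pt_none hc.1 hc.2.1 hc.2.2.1 hc.2.2.2).2.2] at hs
    exact absurd hs (by simp)
  rcases h4 with rfl | rfl | rfl | rfl <;> exact absurd h (by decide)

lemma Pt10 : Pz.tiles (-1,0) = some tB := by
  show Pt (-1,0) = some tB
  simp only [Pt]
  rw [if_neg (by decide : ¬((-1:ℤ),(0:ℤ)) = (0,0))]
  simp

lemma Pt11 : Pz.tiles (-1,1) = some tA := by
  show Pt (-1,1) = some tA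
  simp only [Pt]
  rw [if_neg (by decide : ¬((-1:ℤ),(1:ℤ)) = (0,0)),
    if_neg (by decide : ¬((-1:ℤ),(1:ℤ)) = (-1,0))]
  simp

lemma uniq_of (c : Color) (s0 s1 s2 s3 : Tile)
    (master : ∀ k0 k1 k2 k3 : Fin 6, rotTile k0 tA 3 = c →
      rotTile k0 tA 0 = rotTile k3 tD 3 → rotTile k0 tA 5 = rotTile k1 tB 2 →
      rotTile k1 tB 0 = rotTile k2 tA 3 → rotTile k1 tB 1 = rotTile k3 tD 4 →
      rotTile k2 tA 2 = rotTile k3 tD 5 →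
      (∀ i, rotTile k0 tA i = s0 i) ∧ (∀ i, rotTile k1 tB i = s1 i) ∧
        (∀ i, rotTile k2 tA i = s2 i) ∧ (∀ i, rotTile k3 tD i = s3 i))
    (sol' : ℤ × ℤ → Option Tile) (h : IsSolution Pz sol')
    (hcol : SolColor sol' (0,0) 3 c) :
    ∀ x, sol' x = (if x = (0,0) then some s0 else if x = (-1,0) then some s1
      else if x = (-1,1) then some s2 else if x = (0,1) then some s3 else none) := by
  obtain ⟨h1, h2⟩ := h
  obtain ⟨k0, e0⟩ := (h1 (0,0)).2 tA rfl
  obtain ⟨k1, e1⟩ := (h1 (-1,0)).2 tB Pt10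
  obtain ⟨k2, e2⟩ := (h1 (-1,1)).2 tA Pt11
  obtain ⟨k3, e3⟩ := (h1 (0,1)).2 tD rfl
  have c1 := h2 (0,0) 0 _ _ e0
    (by rw [show ((0:ℤ),(0:ℤ)) + dirs 0 = (0,1) from by decide]; exact e3)
  have c2 := h2 (0,0) 5 _ _ e0
    (by rw [show ((0:ℤ),(0:ℤ)) + dirs 5 = (-1,0) from by decide]; exact e1)
  have c3 := h2 (-1,0) 0 _ _ e1
    (by rw [show ((-1:ℤ),(0:ℤ)) + dirs 0 = (-1,1) from by decide]; exact e2)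
  have c4 := h2 (-1,0) 1 _ _ e1
    (by rw [show ((-1:ℤ),(0:ℤ)) + dirs 1 = (0,1) from by decide]; exact e3)
  have c5 := h2 (-1,1) 2 _ _ e2
    (by rw [show ((-1:ℤ),(1:ℤ)) + dirs 2 = (0,1) from by decide]; exact e3)
  obtain ⟨s, hs, hsc⟩ := hcol
  rw [e0] at hs
  obtain rfl := Option.some.inj hs
  obtain ⟨m0', m1', m2', m3'⟩ := master k0 k1 k2 k3 hsc c1 c2 c3 c4 c5
  have m0 := funext m0'
  have m1 := funext m1'
  have m2 := funext m2'
  have m3 := funext m3' 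
  intro x
  rcases eq_or_ne x (0,0) with rfl | hx0
  · rw [if_pos rfl, e0, m0]
  rcases eq_or_ne x (-1,0) with rfl | hx1
  · rw [if_neg (by decide : ((-1:ℤ),(0:ℤ)) ≠ (0,0)), if_pos rfl, e1, m1]
  rcases eq_or_ne x (-1,1) with rfl | hx2
  · rw [if_neg (by decide : ((-1:ℤ),(1:ℤ)) ≠ (0,0)),
      if_neg (by decide : ((-1:ℤ),(1:ℤ)) ≠ (-1,0)), if_pos rfl, e2, m2]
  rcases eq_or_ne x (0,1) with rfl | hx3
  · rw [if_neg (by decide : ((0:ℤ),(1:ℤ)) ≠ (0,0)),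
      if_neg (by decide : ((0:ℤ),(1:ℤ)) ≠ (-1,0)),
      if_neg (by decide : ((0:ℤ),(1:ℤ)) ≠ (-1,1)), if_pos rfl, e3, m3]
  rw [if_neg hx0, if_neg hx1, if_neg hx2, if_neg hx3]
  exact (h1 x).1 (Pt_none hx0 hx1 hx2 hx3).1

/-- the two-color COPY subpuzzle: one input boundary edge at the bottom and two output boundary edges at the top in two distinct columns; for each color `c ∈ {blue, red}` there is exactly one solution with color `c` at the input edge, and it has color `c` at both output edges. -/
theorem two_color_COPY_subpuzzle :
    ∃ (P : Puzzle) (xIn yOut₁ yOut₂ : ℤ × ℤ),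
      IsBoundary P xIn 3 ∧ IsBoundary P yOut₁ 0 ∧ IsBoundary P yOut₂ 0 ∧
      yOut₁.1 ≠ yOut₂.1 ∧ xIn.2 < yOut₁.2 ∧ xIn.2 < yOut₂.2 ∧
      ∀ c ∈ ({Color.blue, Color.red} : Set Color),
        ∃ sol : ℤ × ℤ → Option Tile,
          (IsSolution P sol ∧ SolColor sol xIn 3 c ∧
            SolColor sol yOut₁ 0 c ∧ SolColor sol yOut₂ 0 c) ∧
          (∀ sol' : ℤ × ℤ → Option Tile,
            IsSolution P sol' → SolColor sol' xIn 3 c → sol' = sol) := by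
  refine ⟨Pz, (0,0), (-1,1), (0,1), ⟨?_, ?_⟩, ⟨?_, ?_⟩, ⟨?_, ?_⟩, ?_, ?_, ?_, ?_⟩
  · show Pt (0,0) ≠ none; decide
  · show Pt ((0,0) + dirs 3) = none; decide
  · show Pt (-1,1) ≠ none; decide
  · show Pt ((-1,1) + dirs 0) = none; decide
  · show Pt (0,1) ≠ none; decide
  · show Pt ((0,1) + dirs 0) = none; decide
  · decide
  · decide
  · decide
  intro c hc
  simp only [Set.mem_insert_iff, Set.mem_singleton_iff] at hc
  rcases hc with rfl | rfl
  · refine ⟨solB, ⟨?_, ⟨tA, rfl, rfl⟩, ⟨tA, rfl, rfl⟩,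
      ⟨sB3, rfl, rfl⟩⟩, ?_⟩
    · refine isSol_of solB hnoneB ⟨0, ?_⟩ ⟨4, ?_⟩ ⟨0, ?_⟩ ⟨1, ?_⟩ (by decide) <;>
        · show some _ = some _
          congr 1
          funext i
          fin_cases i <;> rfl
    · have master : ∀ k0 k1 k2 k3 : Fin 6, rotTile k0 tA 3 = Color.blue →
        rotTile k0 tA 0 = rotTile k3 tD 3 → rotTile k0 tA 5 = rotTile k1 tB 2 →
        rotTile k1 tB 0 = rotTile k2 tA 3 → rotTile k1 tB 1 = rotTile k3 tD 4 →
        rotTile k2 tA 2 = rotTile k3 tD 5 →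
        (∀ i, rotTile k0 tA i = tA i) ∧ (∀ i, rotTile k1 tB i = sB1 i) ∧
          (∀ i, rotTile k2 tA i = tA i) ∧ (∀ i, rotTile k3 tD i = sB3 i) := by decide
      intro sol' hsol' hc'
      funext x
      rw [uniq_of Color.blue tA sB1 tA sB3 master sol' hsol' hc' x]
      rfl
  · refine ⟨solR, ⟨?_, ⟨sR0, rfl, rfl⟩, ⟨sR0, rfl, rfl⟩,
      ⟨tD, rfl, rfl⟩⟩, ?_⟩
    · refine isSol_of solR hnoneR ⟨1, ?_⟩ ⟨1, ?_⟩ ⟨1, ?_⟩ ⟨0, ?_⟩ (by decide) <;>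
        · show some _ = some _
          congr 1
          funext i
          fin_cases i <;> rfl
    · have master : ∀ k0 k1 k2 k3 : Fin 6, rotTile k0 tA 3 = Color.red →
        rotTile k0 tA 0 = rotTile k3 tD 3 → rotTile k0 tA 5 = rotTile k1 tB 2 →
        rotTile k1 tB 0 = rotTile k2 tA 3 → rotTile k1 tB 1 = rotTile k3 tD 4 →
        rotTile k2 tA 2 = rotTile k3 tD 5 →
        (∀ i, rotTile k0 tA i = sR0 i) ∧ (∀ i, rotTile k1 tB i = sR1 i) ∧
          (∀ i, rotTile k2 tA i = sR0 i) ∧ (∀ i, rotTile k3 tD i = tD i) := by decide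
      intro sol' hsol' hc'
      funext x
      rw [uniq_of Color.red sR0 sR1 sR0 tD master sol' hsol' hc' x]
      rfl
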